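/- Let V(Q) = (1/2)Σ_f Σ_{n∈R(f)} (Q^f_n)². If queues evolve as Q^f_n[t+1] = Q^f_n[t] − π_out(f,n)[t] + π_in(f,n)[t] + u^f_n[t] with u^f_n[t] = max(0, π_out(f,n)[t] − Q^f_n[t]), and all π's are bounded by c_max, then the one-step drift satisfies ΔV[t] ≤ B + Σ_f Q^f_{b(f)}[t] λ_f − Σ_{(n,m)} π*_{nm}[t] max_{f:(n,m)∈L(f)} (Q^f_n[t] − Q^f_m[t])⁺, where B = b|F|K_max for a constant b depending only on c_max. -/

import Mathlib

open Finset MeasureTheory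

lemma drift_sq (c q s a : ℝ) (hq : 0 ≤ q) (hs0 : 0 ≤ s) (hs : s ≤ c)
    (ha0 : 0 ≤ a) (ha : a ≤ c) :
    (1/2 : ℝ) * ((q - s + a + max (s - q) 0) ^ 2 - q ^ 2) ≤ c ^ 2 + q * (a - s) := by
  rcases le_total s q with h | h
  · rw [max_eq_right (by linarith)]
    nlinarith [sq_nonneg (s - a), mul_nonneg hq hs0, mul_nonneg hq ha0]
  · rw [max_eq_left (by linarith)]
    nlinarith [sq_nonneg (c - a), sq_nonneg (c - s), mul_nonneg hq ha0, mul_nonneg hq hs0,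
      mul_le_mul_of_nonneg_left hs hq, sq_nonneg (a - q), sq_nonneg q]

lemma tele {Node : Type} (Q πin πout u : Node → ℝ)
    (hQ : ∀ n, 0 ≤ Q n) (hu : ∀ n, 0 ≤ u n) (hπ : ∀ n, 0 ≤ πout n) :
    ∀ (l : List Node) (hl : l ≠ []),
      (∀ (k : ℕ) (h : k + 1 < l.length),
        πin (l[k+1]'h) = πout (l[k]'(Nat.lt_of_succ_lt h)) - u (l[k]'(Nat.lt_of_succ_lt h))) →
      (l.map (fun n => Q n * (πin n - πout n))).sum ≤
        Q (l.head hl) * πin (l.head hl) -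
          ((l.zip l.tail).map (fun nm => (Q nm.1 - Q nm.2) * πout nm.1)).sum := by
  intro l
  induction l with
  | nil => simp
  | cons n rest ih =>
    intro _ relay
    cases rest with
    | nil =>
      simp only [List.map_cons, List.map_nil, List.sum_cons, List.sum_nil, List.head_cons,
        List.tail_cons, List.zip_nil_right, List.map_nil]
      nlinarith [mul_nonneg (hQ n) (hπ n)]
    | cons m rest' =>
      have h1 : πin m = πout n - u n := by
        have := relay 0 (by simp); simpa using this
      have h2 := ih (by simp) (fun k h => by
        have := relay (k+1) (by simpa using Nat.succ_lt_succ h)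
        simpa using this)
      simp only [List.map_cons, List.sum_cons, List.tail_cons, List.head_cons,
        List.zip_cons_cons] at h2 ⊢
      rw [h1] at h2 ⊢
      nlinarith [mul_nonneg (hQ m) (hu n), h2]

lemma integrable_bdd {Ω : Type} [MeasurableSpace Ω] {μ : Measure Ω} [IsFiniteMeasure μ]
    {f : Ω → ℝ} (hf : Measurable f) (C : ℝ) (h : ∀ ω, |f ω| ≤ C) : Integrable f μ :=
  ⟨hf.aestronglyMeasurable,
    HasFiniteIntegral.of_bounded (C := C) (ae_of_all _ fun ω => by
      simpa [Real.norm_eq_abs] using h ω)⟩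


/-- One-step Lyapunov drift bound for back-pressure scheduling with fixed
routes: there is a constant `b` depending only on `c_max` such that, for any
network (flows `F` with routes of at most `K_max` links, current queue state
`Q`, service/arrival variables bounded by `c_max`, queue update
`Q' = Q − π_out + π_in + u`, relay relation `π_in = π_out(prev) − u(prev)`, mean
arrival rate `λ_f` at the source, and back-pressure schedule `π*`),
`E[V(Q') − V(Q)] ≤ b·|F|·K_max + ∑_f Q^f_{b(f)} λ_f
  − ∑_{(n,m)} E[π*_{nm}]·max_{f:(n,m)∈L(f)} (Q^f_n − Q^f_m)⁺`. -/
theorem stmt_7 (c_max : ℝ) (hc : 0 < c_max) :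
    ∃ b : ℝ, 0 < b ∧
    ∀ (F Node : Type) (_ : Fintype F) (_ : DecidableEq F)
      (_ : Fintype Node) (_ : DecidableEq Node)
      (route : F → List Node) (hne : ∀ f, route f ≠ [])
      (_ : ∀ f, (route f).Nodup)
      (Kmax : ℕ) (_ : 1 ≤ Kmax) (_ : ∀ f, (route f).length ≤ Kmax + 1)
      (Ω : Type) (m0 : MeasurableSpace Ω) (μ : Measure Ω)
      (_ : IsProbabilityMeasure μ)
      (Q : F → Node → ℝ) (_ : ∀ f n, 0 ≤ Q f n)
      (πout πin : F → Node → Ω → ℝ) (πstar : Node × Node → Ω → ℝ)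
      (_ : ∀ f n, Measurable (πout f n)) (_ : ∀ f n, Measurable (πin f n))
      (_ : ∀ nm, Measurable (πstar nm))
      (_ : ∀ f n ω, 0 ≤ πout f n ω) (_ : ∀ f n ω, πout f n ω ≤ c_max)
      (_ : ∀ f n ω, 0 ≤ πin f n ω) (_ : ∀ f n ω, πin f n ω ≤ c_max)
      (_ : ∀ nm ω, 0 ≤ πstar nm ω) (_ : ∀ nm ω, πstar nm ω ≤ c_max)
      -- unused-service terms
      (u : F → Node → Ω → ℝ)
      (_ : ∀ f n ω, u f n ω = max (πout f n ω - Q f n) 0)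
      -- queue update
      (Q' : Ω → F → Node → ℝ)
      (_ : ∀ ω f n, Q' ω f n = Q f n - πout f n ω + πin f n ω + u f n ω)
      -- relay relation along each route: π_in at hop k+1 equals the packets
      (_ : ∀ f (k : ℕ) (h : k + 1 < (route f).length) (ω : Ω),
        πin f ((route f)[k + 1]'h) ω =
          πout f ((route f)[k]'(Nat.lt_of_succ_lt h)) ω -
            u f ((route f)[k]'(Nat.lt_of_succ_lt h)) ω)
      -- mean arrival rates at sources
      (lam : F → ℝ) (_ : ∀ f, 0 ≤ lam f)
      (_ : ∀ f, ∫ ω, πin f ((route f).head (hne f)) ω ∂μ = lam f)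
      -- max differential backlog weights
      (w : Node × Node → ℝ)
      (_ : ∀ nm, w nm =
        (univ.filter (fun f => nm ∈ (route f).zip (route f).tail)).fold max 0
          (fun f => max (Q f nm.1 - Q f nm.2) 0))
      -- back-pressure scheduling identity
      (_ : ∀ ω : Ω,
        ∑ f, (((route f).zip (route f).tail).map
            (fun nm => (Q f nm.1 - Q f nm.2) * πout f nm.1 ω)).sum =
          ∑ nm : Node × Node, πstar nm ω * w nm),
      ∫ ω, ((1 / 2 : ℝ) * ∑ f, ∑ n ∈ (route f).toFinset, Q' ω f n ^ 2 -
              (1 / 2 : ℝ) * ∑ f, ∑ n ∈ (route f).toFinset, Q f n ^ 2) ∂μ ≤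
        b * (Fintype.card F) * Kmax + ∑ f, Q f ((route f).head (hne f)) * lam f -
          ∑ nm : Node × Node, (∫ ω, πstar nm ω ∂μ) * w nm := by
  refine ⟨2 * c_max ^ 2, by positivity, ?_⟩
  intro F Node instF instDF instN instDN route hne hnodup Kmax hK hlen Ω m0 μ hμ Q hQ
    πout πin πstar hmout hmin hmstar hout0 houtc hin0 hinc hstar0 hstarc u hu Q' hQ'def
    relay lam hlam hmean w hw sched
  have hu0 : ∀ f n ω, 0 ≤ u f n ω := fun f n ω => by rw [hu]; exact le_max_right _ _
  -- pointwise (per-ω) drift bound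
  have key : ∀ ω : Ω,
      (1 / 2 : ℝ) * ∑ f, ∑ n ∈ (route f).toFinset, Q' ω f n ^ 2 -
        (1 / 2 : ℝ) * ∑ f, ∑ n ∈ (route f).toFinset, Q f n ^ 2 ≤
      2 * c_max ^ 2 * (Fintype.card F) * Kmax +
        ∑ f, Q f ((route f).head (hne f)) * πin f ((route f).head (hne f)) ω -
        ∑ nm : Node × Node, πstar nm ω * w nm := by
    intro ω
    have e1 : (1 / 2 : ℝ) * ∑ f, ∑ n ∈ (route f).toFinset, Q' ω f n ^ 2 -
        (1 / 2 : ℝ) * ∑ f, ∑ n ∈ (route f).toFinset, Q f n ^ 2 =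
        ∑ f, ∑ n ∈ (route f).toFinset, (1 / 2 : ℝ) * (Q' ω f n ^ 2 - Q f n ^ 2) := by
      simp only [Finset.mul_sum, mul_sub, ← Finset.sum_sub_distrib]
    have perflow : ∀ f, ∑ n ∈ (route f).toFinset, (1 / 2 : ℝ) * (Q' ω f n ^ 2 - Q f n ^ 2) ≤
        ((route f).length : ℝ) * c_max ^ 2 +
        (Q f ((route f).head (hne f)) * πin f ((route f).head (hne f)) ω -
          (((route f).zip (route f).tail).map
            (fun nm => (Q f nm.1 - Q f nm.2) * πout f nm.1 ω)).sum) := by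
      intro f
      have step1 : ∑ n ∈ (route f).toFinset, (1 / 2 : ℝ) * (Q' ω f n ^ 2 - Q f n ^ 2) ≤
          ∑ n ∈ (route f).toFinset,
            (c_max ^ 2 + Q f n * (πin f n ω - πout f n ω)) := by
        refine Finset.sum_le_sum fun n _ => ?_
        rw [hQ'def, hu]
        exact drift_sq c_max (Q f n) (πout f n ω) (πin f n ω) (hQ f n)
          (hout0 f n ω) (houtc f n ω) (hin0 f n ω) (hinc f n ω)
      have step2 : ∑ n ∈ (route f).toFinset,
            (c_max ^ 2 + Q f n * (πin f n ω - πout f n ω)) =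
          ((route f).length : ℝ) * c_max ^ 2 +
            ((route f).map (fun n => Q f n * (πin f n ω - πout f n ω))).sum := by
        rw [Finset.sum_add_distrib, Finset.sum_const, nsmul_eq_mul,
          List.toFinset_card_of_nodup (hnodup f), List.sum_toFinset _ (hnodup f)]
      have step3 := tele (fun n => Q f n) (fun n => πin f n ω) (fun n => πout f n ω)
        (fun n => u f n ω) (fun n => hQ f n) (fun n => hu0 f n ω) (fun n => hout0 f n ω)
        (route f) (hne f) (fun k h => relay f k h ω)
      calc ∑ n ∈ (route f).toFinset, (1 / 2 : ℝ) * (Q' ω f n ^ 2 - Q f n ^ 2)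
          ≤ ∑ n ∈ (route f).toFinset,
              (c_max ^ 2 + Q f n * (πin f n ω - πout f n ω)) := step1
        _ = ((route f).length : ℝ) * c_max ^ 2 +
              ((route f).map (fun n => Q f n * (πin f n ω - πout f n ω))).sum := step2
        _ ≤ _ := add_le_add le_rfl step3
    have hA : ∑ f : F, ((route f).length : ℝ) * c_max ^ 2 ≤
        2 * c_max ^ 2 * (Fintype.card F) * Kmax := by
      calc ∑ f : F, ((route f).length : ℝ) * c_max ^ 2
          ≤ ∑ _f : F, (2 * (Kmax : ℝ)) * c_max ^ 2 := by
            refine Finset.sum_le_sum fun f _ => ?_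
            have h1 : ((route f).length : ℝ) ≤ (Kmax : ℝ) + 1 := by exact_mod_cast hlen f
            have h2 : (1 : ℝ) ≤ (Kmax : ℝ) := by exact_mod_cast hK
            exact mul_le_mul_of_nonneg_right (by linarith) (by positivity)
        _ = 2 * c_max ^ 2 * (Fintype.card F) * Kmax := by
            rw [Finset.sum_const, nsmul_eq_mul, Finset.card_univ]; ring
    have hsum := Finset.sum_le_sum (fun f (_ : f ∈ (univ : Finset F)) => perflow f)
    rw [Finset.sum_add_distrib, Finset.sum_sub_distrib, sched ω] at hsum
    rw [e1]
    linarith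
  -- measurability / boundedness of Q'
  have hQ'meas : ∀ f n, Measurable (fun ω => Q' ω f n) := by
    intro f n
    simp only [hQ'def, hu]
    exact ((measurable_const.sub (hmout f n)).add (hmin f n)).add
      (((hmout f n).sub measurable_const).max measurable_const)
  have hQ'bd : ∀ f n ω, |Q' ω f n| ≤ Q f n + 3 * c_max := by
    intro f n ω
    rw [hQ'def, hu, abs_le]
    have h1 : max (πout f n ω - Q f n) 0 ≤ c_max :=
      max_le (by linarith [houtc f n ω, hQ f n]) hc.le
    have h2 : (0:ℝ) ≤ max (πout f n ω - Q f n) 0 := le_max_right _ _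
    constructor
    · nlinarith [hQ f n, hout0 f n ω, houtc f n ω, hin0 f n ω, hinc f n ω]
    · nlinarith [hQ f n, hout0 f n ω, houtc f n ω, hin0 f n ω, hinc f n ω]
  have hI1 : Integrable (fun ω =>
      (1 / 2 : ℝ) * ∑ f, ∑ n ∈ (route f).toFinset, Q' ω f n ^ 2 -
        (1 / 2 : ℝ) * ∑ f, ∑ n ∈ (route f).toFinset, Q f n ^ 2) μ := by
    refine Integrable.sub (Integrable.const_mul ?_ _) (integrable_const _)
    refine integrable_finset_sum _ fun f _ => integrable_finset_sum _ fun n _ => ?_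
    refine integrable_bdd ((hQ'meas f n).pow_const 2) ((Q f n + 3 * c_max) ^ 2) fun ω => ?_
    have h := hQ'bd f n ω
    calc |Q' ω f n ^ 2| = |Q' ω f n| ^ 2 := by rw [abs_pow]
      _ ≤ (Q f n + 3 * c_max) ^ 2 := pow_le_pow_left₀ (abs_nonneg _) h 2
  have hS : Integrable (fun ω =>
      ∑ f, Q f ((route f).head (hne f)) * πin f ((route f).head (hne f)) ω) μ := by
    refine integrable_finset_sum _ fun f _ => Integrable.const_mul ?_ _
    refine integrable_bdd (hmin f _) c_max fun ω => abs_le.2 ⟨?_, hinc f _ ω⟩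
    linarith [hin0 f ((route f).head (hne f)) ω, hc]
  have hT : Integrable (fun ω => ∑ nm : Node × Node, πstar nm ω * w nm) μ := by
    refine integrable_finset_sum _ fun nm _ => Integrable.mul_const ?_ _
    refine integrable_bdd (hmstar nm) c_max fun ω => abs_le.2 ⟨?_, hstarc nm ω⟩
    linarith [hstar0 nm ω, hc]
  have hI2 : Integrable (fun ω =>
      2 * c_max ^ 2 * (Fintype.card F) * (Kmax : ℝ) +
        ∑ f, Q f ((route f).head (hne f)) * πin f ((route f).head (hne f)) ω -
        ∑ nm : Node × Node, πstar nm ω * w nm) μ :=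
    ((integrable_const _).add hS).sub hT
  calc ∫ ω, ((1 / 2 : ℝ) * ∑ f, ∑ n ∈ (route f).toFinset, Q' ω f n ^ 2 -
          (1 / 2 : ℝ) * ∑ f, ∑ n ∈ (route f).toFinset, Q f n ^ 2) ∂μ
      ≤ ∫ ω, (2 * c_max ^ 2 * (Fintype.card F) * (Kmax : ℝ) +
          ∑ f, Q f ((route f).head (hne f)) * πin f ((route f).head (hne f)) ω -
          ∑ nm : Node × Node, πstar nm ω * w nm) ∂μ :=
        integral_mono hI1 hI2 key
    _ = 2 * c_max ^ 2 * (Fintype.card F) * Kmax +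
          ∑ f, Q f ((route f).head (hne f)) * lam f -
          ∑ nm : Node × Node, (∫ ω, πstar nm ω ∂μ) * w nm := by
        have hCS : Integrable (fun ω =>
            2 * c_max ^ 2 * (Fintype.card F) * (Kmax : ℝ) +
              ∑ f, Q f ((route f).head (hne f)) * πin f ((route f).head (hne f)) ω) μ :=
          (integrable_const _).add hS
        have hC : Integrable (fun _ : Ω =>
            2 * c_max ^ 2 * (Fintype.card F) * (Kmax : ℝ)) μ := integrable_const _
        have hSf : ∀ f : F, Integrable (fun ω =>
            Q f ((route f).head (hne f)) * πin f ((route f).head (hne f)) ω) μ := by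
          intro f
          refine Integrable.const_mul ?_ _
          refine integrable_bdd (hmin f _) c_max fun ω => abs_le.2 ⟨?_, hinc f _ ω⟩
          linarith [hin0 f ((route f).head (hne f)) ω, hc]
        have hTf : ∀ nm : Node × Node, Integrable (fun ω => πstar nm ω * w nm) μ := by
          intro nm
          refine Integrable.mul_const ?_ _
          refine integrable_bdd (hmstar nm) c_max fun ω => abs_le.2 ⟨?_, hstarc nm ω⟩
          linarith [hstar0 nm ω, hc]
        rw [integral_sub hCS hT]
        rw [integral_add hC hS]
        rw [integral_const]
        rw [integral_finset_sum _ fun f _ => hSf f]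
        rw [integral_finset_sum _ fun nm _ => hTf nm]
        simp only [measure_univ, probReal_univ, ENNReal.toReal_one, smul_eq_mul, one_mul]
        congr 1
        · congr 1
          refine Finset.sum_congr rfl fun f _ => ?_
          rw [integral_const_mul, hmean f]
        · exact Finset.sum_congr rfl fun nm _ => integral_mul_const _ _
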